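/- Let k ≥ 3 and 0 < ε ≤ (k-1)/2 be integers and let G be a vgr(n, k, 5, k(k-1)²/2 − ε)-graph. Let u be a vertex of G, let v be a vertex at distance exactly 3 from u whose unique neighbor in N_2(u) is v', and define V_{B''} = (N_2(v) ∩ N_2(u)) ∖ N(v') and V_{C''} = N_2(v) ∖ (N(u) ∪ N_2(u) ∪ N(v')). Then the number of neighbors v_i of v with v_i ≠ v' satisfying |N(v_i) ∩ V_{C''}| = k − 2 is exactly |V_{B''}|. -/

import Mathlib

open SimpleGraph

/-- The set of vertices at distance exactly 2 from `v` in `G` (denoted `N₂(v)`). -/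
def distTwoSet {V : Type*} (G : SimpleGraph V) (v : V) : Set V := {w | G.dist v w = 2}

/-- The set of edges of `G` with one endpoint in `A` and the other endpoint in `B`,
denoted `E(A, B)`. -/
def edgesBetween {V : Type*} (G : SimpleGraph V) (A B : Set V) : Set (Sym2 V) :=
  {e | e ∈ G.edgeSet ∧ ∃ a ∈ A, ∃ b ∈ B, e = s(a, b)}

/-- Twice the number of cycles of length `g` through the vertex `v`: we count the closed
walks based at `v` that are cycles of length `g`; every (undirected) cycle of length `g`
containing `v` corresponds to exactly two such walks (its two orientations). -/
noncomputable def doubleCycleCountAt {V : Type*} (G : SimpleGraph V) (g : ℕ) (v : V) : ℕ :=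
  {p : G.Walk v v | p.IsCycle ∧ p.length = g}.ncard

/-- `G` is a `vgr(n, k, g, lam)`-graph: a `k`-regular graph of girth `g` on `n` vertices
in which every vertex lies on exactly `lam` cycles of length `g` (equivalently, the number
of closed cycle-walks of length `g` based at each vertex is `2 * lam`). -/
def IsVGR {V : Type*} [Fintype V] (G : SimpleGraph V) [DecidableRel G.Adj]
    (n k g lam : ℕ) : Prop :=
  Fintype.card V = n ∧ (∀ v : V, G.degree v = k) ∧ G.girth = (g : ℕ∞) ∧
    ∀ v : V, doubleCycleCountAt G g v = 2 * lam

section VGR18Helpers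

set_option linter.unusedSectionVars false

open Finset Walk

variable {V : Type*} [Fintype V] [DecidableEq V] {G : SimpleGraph V} [DecidableRel G.Adj]

lemma vgr18_cycles {G : SimpleGraph V} (h : G.girth = 5) :
    ∀ (a : V) (w : G.Walk a a), w.IsCycle → 5 ≤ w.length := by
  have hne : G.egirth ≠ ⊤ := by
    intro ht
    rw [SimpleGraph.girth, ht] at h
    simp at h
  have h5 : G.egirth = (5 : ℕ∞) := by
    have h2 := ENat.coe_toNat hne
    rw [SimpleGraph.girth] at h
    rw [← h2, h]
    rfl
  intro a w hw
  have := SimpleGraph.le_egirth.mp h5.ge a w hw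
  exact_mod_cast this

lemma vgr18_tri {G : SimpleGraph V} (h5 : ∀ (a : V) (w : G.Walk a a), w.IsCycle → 5 ≤ w.length)
    {a b c : V} (hab : G.Adj a b) (hbc : G.Adj b c) (hca : G.Adj c a) : False := by
  have n1 : a ≠ b := hab.ne
  have n2 : b ≠ c := hbc.ne
  have n3 : c ≠ a := hca.ne
  have hc : (Walk.cons hab (Walk.cons hbc (Walk.cons hca Walk.nil))).IsCycle := by
    rw [Walk.cons_isCycle_iff]
    constructor
    · rw [Walk.isPath_def]
      simp only [Walk.support_cons, Walk.support_nil, List.nodup_cons, List.mem_cons,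
        List.not_mem_nil, or_false, List.nodup_nil, and_true, List.mem_singleton]
      tauto
    · simp only [Walk.edges_cons, Walk.edges_nil, List.mem_cons, List.not_mem_nil, or_false,
        Sym2.eq_iff]
      tauto
  have := h5 a _ hc
  simp at this

lemma vgr18_quad {G : SimpleGraph V}
    (h5 : ∀ (a : V) (w : G.Walk a a), w.IsCycle → 5 ≤ w.length)
    {a b c d : V} (hab : G.Adj a b) (hbc : G.Adj b c) (hcd : G.Adj c d) (hda : G.Adj d a)
    (hac : a ≠ c) (hbd : b ≠ d) : False := by
  have n1 : a ≠ b := hab.ne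
  have n2 : b ≠ c := hbc.ne
  have n3 : c ≠ d := hcd.ne
  have n4 : d ≠ a := hda.ne
  have hc : (Walk.cons hab (Walk.cons hbc (Walk.cons hcd (Walk.cons hda Walk.nil)))).IsCycle := by
    rw [Walk.cons_isCycle_iff]
    constructor
    · rw [Walk.isPath_def]
      simp only [Walk.support_cons, Walk.support_nil, List.nodup_cons, List.mem_cons,
        List.not_mem_nil, or_false, List.nodup_nil, and_true, List.mem_singleton]
      tauto
    · simp only [Walk.edges_cons, Walk.edges_nil, List.mem_cons, List.not_mem_nil, or_false,
        Sym2.eq_iff]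
      tauto
  have := h5 a _ hc
  simp at this

lemma vgr18_dist_two_iff (G : SimpleGraph V) (z y : V) :
    G.dist z y = 2 ↔ z ≠ y ∧ ¬G.Adj z y ∧ ∃ a, G.Adj z a ∧ G.Adj a y := by
  constructor
  · intro h
    have hz : z ≠ y := by rintro rfl; simp [SimpleGraph.dist_self] at h
    have hadj : ¬ G.Adj z y := fun ha => by
      have := (SimpleGraph.dist_eq_one_iff_adj).mpr ha; omega
    obtain ⟨p, hp⟩ := SimpleGraph.exists_walk_of_dist_ne_zero (by omega : G.dist z y ≠ 0)
    rw [h] at hp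
    refine ⟨hz, hadj, ?_⟩
    cases p with
    | nil => simp at hp
    | cons h1 q =>
      cases q with
      | nil => simp at hp
      | cons h2 r =>
        cases r with
        | nil => exact ⟨_, h1, h2⟩
        | cons h3 s => simp [Walk.length_cons] at hp
  · rintro ⟨hz, hadj, a, h1, h2⟩
    have hle : G.dist z y ≤ 2 := by
      simpa using SimpleGraph.dist_le (Walk.cons h1 (Walk.cons h2 Walk.nil))
    have h0 : G.dist z y ≠ 0 := by
      rw [SimpleGraph.dist_ne_zero_iff_ne_and_reachable]
      exact ⟨hz, ⟨Walk.cons h1 (Walk.cons h2 Walk.nil)⟩⟩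
    have h1' : G.dist z y ≠ 1 := fun he => hadj (SimpleGraph.dist_eq_one_iff_adj.mp he)
    omega

lemma vgr18_dist_le_succ {G : SimpleGraph V} {z a b : V} (h : G.Adj a b)
    (hr : G.Reachable z a) : G.dist z b ≤ G.dist z a + 1 := by
  obtain ⟨p, hp⟩ := hr.exists_walk_length_eq_dist
  have := SimpleGraph.dist_le (p.concat h)
  rwa [Walk.length_concat, hp] at this

noncomputable def vgrN2 (G : SimpleGraph V) (z : V) : Finset V :=
  Finset.univ.filter (fun w => G.dist z w = 2)

noncomputable def vgrN3 (G : SimpleGraph V) (z : V) : Finset V :=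
  Finset.univ.filter (fun w => G.dist z w = 3)

lemma mem_vgrN2 {z y : V} : y ∈ vgrN2 G z ↔ G.dist z y = 2 := by simp [vgrN2]
lemma mem_vgrN3 {z y : V} : y ∈ vgrN3 G z ↔ G.dist z y = 3 := by simp [vgrN3]

noncomputable def vgrE23 [DecidableEq V] (G : SimpleGraph V) [DecidableRel G.Adj] (z : V) : ℕ :=
  ∑ y ∈ vgrN2 G z, (G.neighborFinset y ∩ vgrN3 G z).card

lemma vgr18_unique_mid (quad : ∀ ⦃a b c d : V⦄, G.Adj a b → G.Adj b c → G.Adj c d → G.Adj d a →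
      a ≠ c → b ≠ d → False)
    {z y a b : V} (hzy : z ≠ y) (ha1 : G.Adj z a) (ha2 : G.Adj a y)
    (hb1 : G.Adj z b) (hb2 : G.Adj b y) : a = b := by
  by_contra hne
  exact quad ha1 ha2 hb2.symm hb1.symm hzy hne

lemma vgr18_card_mid (quad : ∀ ⦃a b c d : V⦄, G.Adj a b → G.Adj b c → G.Adj c d → G.Adj d a →
      a ≠ c → b ≠ d → False)
    {z y : V} (h : G.dist z y = 2) :
    (G.neighborFinset y ∩ G.neighborFinset z).card = 1 := by
  obtain ⟨hzy, hadj, a, h1, h2⟩ := (vgr18_dist_two_iff G z y).mp h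
  rw [Finset.card_eq_one]
  refine ⟨a, ?_⟩
  ext t
  simp only [Finset.mem_inter, mem_neighborFinset, Finset.mem_singleton]
  constructor
  · rintro ⟨ht1, ht2⟩
    exact vgr18_unique_mid quad hzy ht2 ht1.symm h1 h2
  · rintro rfl
    exact ⟨h2.symm, h1⟩

lemma vgr18_N2_eq_biUnion
    (tri : ∀ ⦃a b c : V⦄, G.Adj a b → G.Adj b c → G.Adj c a → False) (z : V) :
    vgrN2 G z = (G.neighborFinset z).biUnion (fun a => G.neighborFinset a \ {z}) := by
  ext y
  simp only [mem_vgrN2, Finset.mem_biUnion, mem_neighborFinset, Finset.mem_sdiff,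
    Finset.mem_singleton]
  rw [vgr18_dist_two_iff]
  constructor
  · rintro ⟨hzy, hadj, a, h1, h2⟩
    exact ⟨a, h1, h2, fun hy => hzy (hy ▸ rfl)⟩
  · rintro ⟨a, h1, h2, hyz⟩
    exact ⟨fun hh => hyz hh.symm, fun hzy => tri hzy h2.symm h1.symm, a, h1, h2⟩

lemma vgr18_card_N2 {k : ℕ} (hreg : ∀ w : V, G.degree w = k)
    (tri : ∀ ⦃a b c : V⦄, G.Adj a b → G.Adj b c → G.Adj c a → False)
    (quad : ∀ ⦃a b c d : V⦄, G.Adj a b → G.Adj b c → G.Adj c d → G.Adj d a →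
      a ≠ c → b ≠ d → False) (z : V) :
    (vgrN2 G z).card = k * (k - 1) := by
  rw [vgr18_N2_eq_biUnion tri z, Finset.card_biUnion]
  · have : ∀ a ∈ G.neighborFinset z, (G.neighborFinset a \ {z}).card = k - 1 := by
      intro a ha
      rw [mem_neighborFinset] at ha
      rw [Finset.card_sdiff_of_subset (by simp [ha.symm]), card_neighborFinset_eq_degree, hreg]
      simp
    rw [Finset.sum_congr rfl this, Finset.sum_const, card_neighborFinset_eq_degree, hreg,
      smul_eq_mul]
  · intro a ha b hb hab
    rw [Finset.mem_coe, mem_neighborFinset] at ha hb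
    simp only [Finset.disjoint_left, Finset.mem_sdiff, Finset.mem_singleton,
      mem_neighborFinset]
    rintro y ⟨hy1, hy2⟩ ⟨hy3, _⟩
    exact hab (vgr18_unique_mid quad (fun h => hy2 h.symm) ha hy1 hb hy3)

lemma vgr18_nbr_cover {z y t : V} (h : G.dist z y = 2) (ht : G.Adj y t) :
    G.Adj z t ∨ t ∈ vgrN2 G z ∨ t ∈ vgrN3 G z := by
  obtain ⟨hzy, hadj, a, h1, h2⟩ := (vgr18_dist_two_iff G z y).mp h
  have hr : G.Reachable z y := ⟨Walk.cons h1 (Walk.cons h2 Walk.nil)⟩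
  have hle : G.dist z t ≤ 3 := by
    have := vgr18_dist_le_succ ht hr
    omega
  have hrt : G.Reachable z t := hr.trans ⟨ht.toWalk⟩
  have h0 : G.dist z t ≠ 0 := by
    rw [SimpleGraph.dist_ne_zero_iff_ne_and_reachable]
    refine ⟨?_, hrt⟩
    rintro rfl
    exact hadj ht.symm
  rcases (by omega : G.dist z t = 1 ∨ G.dist z t = 2 ∨ G.dist z t = 3) with h' | h' | h'
  · exact Or.inl (SimpleGraph.dist_eq_one_iff_adj.mp h')
  · exact Or.inr (Or.inl (mem_vgrN2.mpr h'))
  · exact Or.inr (Or.inr (mem_vgrN3.mpr h'))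

lemma vgr18_partition {k : ℕ} (hreg : ∀ w : V, G.degree w = k)
    (quad : ∀ ⦃a b c d : V⦄, G.Adj a b → G.Adj b c → G.Adj c d → G.Adj d a →
      a ≠ c → b ≠ d → False)
    {z y : V} (h : G.dist z y = 2) :
    k = 1 + (G.neighborFinset y ∩ vgrN2 G z).card + (G.neighborFinset y ∩ vgrN3 G z).card := by
  have hcover : G.neighborFinset y =
      (G.neighborFinset y ∩ G.neighborFinset z) ∪ ((G.neighborFinset y ∩ vgrN2 G z)
        ∪ (G.neighborFinset y ∩ vgrN3 G z)) := by
    ext t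
    simp only [Finset.mem_union, Finset.mem_inter, mem_neighborFinset]
    constructor
    · intro ht
      rcases vgr18_nbr_cover h ht with h' | h' | h'
      · exact Or.inl ⟨ht, h'⟩
      · exact Or.inr (Or.inl ⟨ht, h'⟩)
      · exact Or.inr (Or.inr ⟨ht, h'⟩)
    · rintro (⟨ht, _⟩ | ⟨ht, _⟩ | ⟨ht, _⟩) <;> exact ht
  have d23 : Disjoint (G.neighborFinset y ∩ vgrN2 G z) (G.neighborFinset y ∩ vgrN3 G z) := by
    simp only [Finset.disjoint_left, Finset.mem_inter, mem_vgrN2, mem_vgrN3]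
    rintro t ⟨_, h2⟩ ⟨_, h3⟩
    omega
  have d123 : Disjoint (G.neighborFinset y ∩ G.neighborFinset z)
      ((G.neighborFinset y ∩ vgrN2 G z) ∪ (G.neighborFinset y ∩ vgrN3 G z)) := by
    simp only [Finset.disjoint_left, Finset.mem_inter, Finset.mem_union, mem_vgrN2, mem_vgrN3,
      mem_neighborFinset]
    rintro t ⟨_, h1⟩ (⟨_, h2⟩ | ⟨_, h2⟩) <;>
      · have := SimpleGraph.dist_eq_one_iff_adj.mpr h1
        omega
  have hk : (G.neighborFinset y).card = k := by
    rw [card_neighborFinset_eq_degree, hreg]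
  rw [hcover, Finset.card_union_of_disjoint d123, Finset.card_union_of_disjoint d23,
    vgr18_card_mid quad h] at hk
  omega

lemma vgr18_prod_sum (A : Finset V) :
    ((A ×ˢ A).filter fun q => G.Adj q.1 q.2).card
      = ∑ y ∈ A, (G.neighborFinset y ∩ A).card := by
  have : ((A ×ˢ A).filter fun q => G.Adj q.1 q.2)
      = A.biUnion (fun y => (G.neighborFinset y ∩ A).image (fun w => (y, w))) := by
    ext q
    simp only [Finset.mem_filter, Finset.mem_product, Finset.mem_biUnion, Finset.mem_image,
      Finset.mem_inter, mem_neighborFinset]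
    constructor
    · rintro ⟨⟨h1, h2⟩, h3⟩
      exact ⟨q.1, h1, q.2, ⟨h3, h2⟩, rfl⟩
    · rintro ⟨y, hy, w, ⟨hw1, hw2⟩, rfl⟩
      exact ⟨⟨hy, hw2⟩, hw1⟩
  rw [this, Finset.card_biUnion]
  · refine Finset.sum_congr rfl fun y _ => ?_
    rw [Finset.card_image_of_injective _ (fun a b hab => by simpa using hab)]
  · intro a _ b _ hab
    simp only [Finset.disjoint_left, Finset.mem_image]
    rintro q ⟨w, _, rfl⟩ ⟨w', _, h⟩
    exact hab (congrArg Prod.fst h).symm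

lemma vgr18_cycle5_decomp {z : V} (p : G.Walk z z) (hc : p.IsCycle) (hl : p.length = 5) :
    ∃ (a y w b : V) (h1 : G.Adj z a) (h2 : G.Adj a y) (h3 : G.Adj y w) (h4 : G.Adj w b)
      (h5 : G.Adj b z),
      p = Walk.cons h1 (Walk.cons h2 (Walk.cons h3 (Walk.cons h4 (Walk.cons h5 Walk.nil)))) ∧
      z ≠ a ∧ z ≠ y ∧ z ≠ w ∧ z ≠ b ∧ a ≠ y ∧ a ≠ w ∧ a ≠ b ∧ y ≠ w ∧ y ≠ b ∧ w ≠ b := by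
  cases p with
  | nil => simp at hl
  | cons h1 q =>
  cases q with
  | nil => simp at hl
  | cons h2 q =>
  cases q with
  | nil => simp at hl
  | cons h3 q =>
  cases q with
  | nil => simp at hl
  | cons h4 q =>
  cases q with
  | nil => simp at hl
  | cons h5 q =>
  cases q with
  | cons h6 q => simp [Walk.length_cons] at hl
  | nil =>
    have hnd := hc.support_nodup
    simp only [Walk.support_cons, Walk.support_nil, List.tail_cons, List.nodup_cons,
      List.mem_cons, List.mem_singleton, List.not_mem_nil, or_false, List.nodup_nil,
      and_true, not_or] at hnd
    refine ⟨_, _, _, _, h1, h2, h3, h4, h5, rfl, ?_⟩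
    refine ⟨?_,?_,?_,?_,?_,?_,?_,?_,?_,?_⟩ <;> tauto

lemma vgr18_pentagon
    (tri : ∀ ⦃a b c : V⦄, G.Adj a b → G.Adj b c → G.Adj c a → False)
    (quad : ∀ ⦃a b c d : V⦄, G.Adj a b → G.Adj b c → G.Adj c d → G.Adj d a →
      a ≠ c → b ≠ d → False) (z : V) :
    doubleCycleCountAt G 5 z
      = ((vgrN2 G z ×ˢ vgrN2 G z).filter fun q => G.Adj q.1 q.2).card := by
  classical
  set S : Set (G.Walk z z) := {p | p.IsCycle ∧ p.length = 5} with hS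
  set T : Finset (V × V) := (vgrN2 G z ×ˢ vgrN2 G z).filter fun q => G.Adj q.1 q.2 with hT
  set f : G.Walk z z → V × V := fun p => (p.getVert 2, p.getVert 3) with hf
  have himg : f '' S = ↑T := by
    ext q
    constructor
    · rintro ⟨p, ⟨hc, hl⟩, rfl⟩
      obtain ⟨a, y, w, b, h1, h2, h3, h4, h5, rfl, hza, hzy, hzw, hzb, hay, haw, hab, hyw,
        hyb, hwb⟩ := vgr18_cycle5_decomp p hc hl
      have hy2 : G.dist z y = 2 := (vgr18_dist_two_iff G z y).mpr
        ⟨hzy, fun hadj => tri h1 h2 hadj.symm, a, h1, h2⟩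
      have hw2 : G.dist z w = 2 := (vgr18_dist_two_iff G z w).mpr
        ⟨hzw, fun hadj => tri h4 h5 hadj, b, h5.symm, h4.symm⟩
      have : f (Walk.cons h1 (Walk.cons h2 (Walk.cons h3 (Walk.cons h4 (Walk.cons h5
          Walk.nil))))) = (y, w) := by
        simp [hf, Walk.getVert_cons_succ, Walk.getVert_zero]
      rw [this]
      simp only [hT, Finset.coe_filter, Set.mem_setOf_eq, Finset.mem_product, mem_vgrN2]
      exact ⟨⟨hy2, hw2⟩, h3⟩
    · intro hq
      simp only [hT, Finset.coe_filter, Set.mem_setOf_eq, Finset.mem_product, mem_vgrN2] at hq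
      obtain ⟨⟨hy2, hw2⟩, hyw⟩ := hq
      obtain ⟨y, w⟩ := q
      simp only at hy2 hw2 hyw
      obtain ⟨hzy, hnzy, a, ha1, ha2⟩ := (vgr18_dist_two_iff G z y).mp hy2
      obtain ⟨hzw, hnzw, b, hb1, hb2⟩ := (vgr18_dist_two_iff G z w).mp hw2
      have hay : a ≠ y := ha2.ne
      have haw : a ≠ w := fun h => hnzw (h ▸ ha1)
      have hazb : a ≠ b := fun h => tri ha2 hyw (h ▸ hb2).symm
      have hyb : y ≠ b := fun h => hnzy (h ▸ hb1)
      have hwb : w ≠ b := hb2.ne'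
      have hza : z ≠ a := ha1.ne
      have hzb : z ≠ b := hb1.ne
      refine ⟨Walk.cons ha1 (Walk.cons ha2 (Walk.cons hyw (Walk.cons hb2.symm
        (Walk.cons hb1.symm Walk.nil)))), ⟨?_, by simp⟩, ?_⟩
      · rw [Walk.cons_isCycle_iff]
        constructor
        · rw [Walk.isPath_def]
          simp only [Walk.support_cons, Walk.support_nil, List.nodup_cons, List.mem_cons,
            List.mem_singleton, List.not_mem_nil, or_false, List.nodup_nil, and_true]
          have := hyw.ne
          refine ⟨?_,?_,?_,?_⟩ <;> tauto
        · simp only [Walk.edges_cons, Walk.edges_nil, List.mem_cons, List.not_mem_nil,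
            or_false, Sym2.eq_iff]
          have := hyw.ne
          tauto
      · simp [hf, Walk.getVert_cons_succ, Walk.getVert_zero]
  have hinj : Set.InjOn f S := by
    rintro p ⟨hc, hl⟩ p' ⟨hc', hl'⟩ hfeq
    obtain ⟨a, y, w, b, h1, h2, h3, h4, h5, hp, hza, hzy, hzw, hzb, hay, haw, hab, hyw,
      hyb, hwb⟩ := vgr18_cycle5_decomp p hc hl
    obtain ⟨a', y', w', b', h1', h2', h3', h4', h5', hp', hza', hzy', hzw', hzb', hay', haw',
      hab', hyw', hyb', hwb'⟩ := vgr18_cycle5_decomp p' hc' hl'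
    subst hp hp'
    have hgv : (y, w) = (y', w') := by
      have e1 : f (Walk.cons h1 (Walk.cons h2 (Walk.cons h3 (Walk.cons h4 (Walk.cons h5
          Walk.nil))))) = (y, w) := by simp [hf, Walk.getVert_cons_succ, Walk.getVert_zero]
      have e2 : f (Walk.cons h1' (Walk.cons h2' (Walk.cons h3' (Walk.cons h4' (Walk.cons h5'
          Walk.nil))))) = (y', w') := by simp [hf, Walk.getVert_cons_succ, Walk.getVert_zero]
      rw [← e1, ← e2, hfeq]
    obtain ⟨rfl, rfl⟩ : y = y' ∧ w = w' := by simpa [Prod.ext_iff] using hgv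
    obtain rfl : a = a' := vgr18_unique_mid quad hzy h1 h2 h1' h2'
    obtain rfl : b = b' := vgr18_unique_mid quad hzw h5.symm h4.symm h5'.symm h4'.symm
    rfl
  have : doubleCycleCountAt G 5 z = S.ncard := rfl
  rw [this, ← Set.ncard_image_of_injOn hinj, himg, Set.ncard_coe_finset]

lemma vgr18_E23 {k ε : ℕ} (hk : 3 ≤ k) (hεk : 2 * ε ≤ k - 1)
    (hreg : ∀ w : V, G.degree w = k)
    (tri : ∀ ⦃a b c : V⦄, G.Adj a b → G.Adj b c → G.Adj c a → False)
    (quad : ∀ ⦃a b c d : V⦄, G.Adj a b → G.Adj b c → G.Adj c d → G.Adj d a →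
      a ≠ c → b ≠ d → False)
    (z : V) (hcyc : doubleCycleCountAt G 5 z = 2 * (k * (k - 1) ^ 2 / 2 - ε)) :
    vgrE23 G z = 2 * ε := by
  have hS2 : (∑ y ∈ vgrN2 G z, (G.neighborFinset y ∩ vgrN2 G z).card)
      = 2 * (k * (k - 1) ^ 2 / 2 - ε) := by
    rw [← vgr18_prod_sum, ← vgr18_pentagon tri quad, hcyc]
  have hsumk : (vgrN2 G z).card * k
      = (vgrN2 G z).card + (∑ y ∈ vgrN2 G z, (G.neighborFinset y ∩ vgrN2 G z).card)
        + vgrE23 G z := by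
    have h1 : ∑ y ∈ vgrN2 G z, k
        = ∑ y ∈ vgrN2 G z, (1 + (G.neighborFinset y ∩ vgrN2 G z).card
          + (G.neighborFinset y ∩ vgrN3 G z).card) := by
      refine Finset.sum_congr rfl fun y hy => ?_
      have hy2 : G.dist z y = 2 := by simpa [vgrN2] using hy
      exact vgr18_partition hreg quad hy2
    rw [Finset.sum_add_distrib, Finset.sum_add_distrib, Finset.sum_const, Finset.sum_const,
      smul_eq_mul, smul_eq_mul, mul_one] at h1
    simp only [vgrE23]
    exact h1
  rw [vgr18_card_N2 hreg tri quad, hS2] at hsumk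
  obtain ⟨j, rfl⟩ : ∃ j, k = j + 1 := ⟨k - 1, by omega⟩
  simp only [Nat.add_sub_cancel] at hsumk hεk
  obtain ⟨m, hm⟩ : ∃ m, j * (j + 1) = 2 * m := (Nat.even_mul_succ_self j).exists_two_nsmul _
  have hq : (j+1) * j ^ 2 = 2 * (m * j) := by
    rw [show (j+1) * j^2 = (j * (j+1)) * j by ring, hm]; ring
  have e4 : ((j+1) * j) * (j+1) = (j+1) * j + 2 * (m * j) := by
    rw [show ((j+1)*j)*(j+1) = (j+1)*j + (j+1)*j^2 by ring, hq]
  rw [hq, e4] at hsumk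
  have hjm : j ≤ m := by
    have h2 : j * 2 ≤ j * (j + 1) := Nat.mul_le_mul_left j (by omega)
    omega
  have hεm : ε ≤ m * j := by
    have h3 : m * 1 ≤ m * j := Nat.mul_le_mul_left m (by omega)
    omega
  omega

end VGR18Helpers

/-- Let `G` be a `vgr(n, k, 5, k(k-1)²/2 − ε)`-graph with `k ≥ 3` and
`0 < ε ≤ (k-1)/2`, let `u` be a vertex, let `v` be at distance exactly `3` from `u` with
unique neighbor `v'` in `N₂(u)`, and set `V_{B''} = (N₂(v) ∩ N₂(u)) ∖ N(v')` and
`V_{C''} = N₂(v) ∖ (N(u) ∪ N₂(u) ∪ N(v'))`.  Then the number of neighbors `vᵢ ≠ v'` of `v`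
with `|N(vᵢ) ∩ V_{C''}| = k − 2` is exactly `|V_{B''}|`. -/
theorem vgr_Li_small_count {V : Type*} [Fintype V] (G : SimpleGraph V) [DecidableRel G.Adj]
    (k ε n : ℕ) (hk : 3 ≤ k) (hε : 0 < ε) (hεk : 2 * ε ≤ k - 1)
    (hG : IsVGR G n k 5 (k * (k - 1) ^ 2 / 2 - ε)) (u v v' : V)
    (hdist : G.dist u v = 3)
    (hv' : G.neighborSet v ∩ distTwoSet G u = {v'}) :
    {vi : V | G.Adj v vi ∧ vi ≠ v' ∧
        (G.neighborSet vi
          ∩ (distTwoSet G v \ (G.neighborSet u ∪ distTwoSet G u ∪ G.neighborSet v'))).ncard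
          = k - 2}.ncard
      = ((distTwoSet G v ∩ distTwoSet G u) \ G.neighborSet v').ncard := by
  classical
  obtain ⟨hcardV, hreg, hgirth, hcyc⟩ := hG
  have hg5 : G.girth = 5 := by exact_mod_cast hgirth
  have h5cyc := vgr18_cycles hg5
  have tri : ∀ ⦃a b c : V⦄, G.Adj a b → G.Adj b c → G.Adj c a → False :=
    fun _ _ _ hab hbc hca => vgr18_tri h5cyc hab hbc hca
  have quad : ∀ ⦃a b c d : V⦄, G.Adj a b → G.Adj b c → G.Adj c d → G.Adj d a →
      a ≠ c → b ≠ d → False :=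
    fun _ _ _ _ hab hbc hcd hda hac hbd => vgr18_quad h5cyc hab hbc hcd hda hac hbd
  have hE23 : ∀ z : V, vgrE23 G z = 2 * ε :=
    fun z => vgr18_E23 hk hεk hreg tri quad z (hcyc z)
  -- basic facts
  have hne_uv : u ≠ v := by rintro rfl; simp [SimpleGraph.dist_self] at hdist
  have hnadj_uv : ¬G.Adj u v := fun h => by
    have := SimpleGraph.dist_eq_one_iff_adj.mpr h; omega
  have hdvu : G.dist v u = 3 := by rw [SimpleGraph.dist_comm]; exact hdist
  have hv'mem : v' ∈ G.neighborSet v ∩ distTwoSet G u := by rw [hv']; rfl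
  have hv'adj : G.Adj v v' := hv'mem.1
  have hv'd2 : G.dist u v' = 2 := hv'mem.2
  have huniq : ∀ y : V, G.Adj v y → G.dist u y = 2 → y = v' := by
    intro y h1 h2
    have : y ∈ G.neighborSet v ∩ distTwoSet G u := ⟨h1, h2⟩
    rwa [hv'] at this
  have hdvv' : G.dist v v' = 1 := SimpleGraph.dist_eq_one_iff_adj.mpr hv'adj
  have hNuv : ∀ c : V, G.Adj u c → G.Adj c v → False := fun c h1 h2 => by
    have : G.dist u v ≤ 2 := by
      simpa using SimpleGraph.dist_le (Walk.cons h1 (Walk.cons h2 Walk.nil))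
    omega
  obtain ⟨huv'ne, hnadjuv', x, hux, hxv'⟩ := (vgr18_dist_two_iff G u v').mp hv'd2
  have hx_uniq : ∀ c : V, G.Adj u c → G.Adj c v' → c = x :=
    fun c h1 h2 => vgr18_unique_mid quad huv'ne h1 h2 hux hxv'
  have hxny : x ≠ v := fun h => hnadj_uv (h ▸ hux)
  have hadjv'x : G.Adj v' x := hxv'.symm
  -- any neighbor of v other than v', adjacent to something in N2(u), is in N3(u)
  have h_viN3 : ∀ y w : V, G.Adj v y → y ≠ v' → G.Adj y w → G.dist u w = 2 →
      G.dist u y = 3 := by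
    intro y w h1 h2 h3 h4
    have hruw : G.Reachable u w := Reachable.of_dist_ne_zero (by omega)
    have hle : G.dist u y ≤ 3 := by
      have := vgr18_dist_le_succ h3.symm hruw; omega
    have hruy : G.Reachable u y := hruw.trans ⟨h3.symm.toWalk⟩
    have h0 : G.dist u y ≠ 0 := by
      rw [SimpleGraph.dist_ne_zero_iff_ne_and_reachable]
      refine ⟨?_, hruy⟩
      rintro rfl
      exact hnadj_uv h1.symm
    have h1' : G.dist u y ≠ 1 := by
      intro he
      have hadj := SimpleGraph.dist_eq_one_iff_adj.mp he
      have : G.dist u v ≤ 2 := by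
        simpa using SimpleGraph.dist_le (Walk.cons hadj (Walk.cons h1.symm Walk.nil))
      omega
    have h2' : G.dist u y ≠ 2 := fun he => h2 (huniq y h1 he)
    omega
  -- a vertex adjacent to u at distance 2 from v must be x
  have hNuN2v : ∀ c : V, G.Adj u c → G.dist v c = 2 → c = x := by
    intro c h1 h2
    obtain ⟨hvc, hnadjvc, y, hy1, hy2⟩ := (vgr18_dist_two_iff G v c).mp h2
    have hyu : y ≠ u := by rintro rfl; exact hnadj_uv hy1.symm
    have hnyu : ¬G.Adj u y := fun h => tri h1 hy2.symm h.symm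
    have hd : G.dist u y ≤ 2 := by
      simpa using SimpleGraph.dist_le (Walk.cons h1 (Walk.cons hy2.symm Walk.nil))
    have h0 : G.dist u y ≠ 0 := by
      rw [SimpleGraph.dist_ne_zero_iff_ne_and_reachable]
      exact ⟨fun h => hyu h.symm, ⟨Walk.cons h1 (Walk.cons hy2.symm Walk.nil)⟩⟩
    have h1'' : G.dist u y ≠ 1 := fun he => hnyu (SimpleGraph.dist_eq_one_iff_adj.mp he)
    have hy2d : G.dist u y = 2 := by omega
    have := huniq y hy1 hy2d
    subst this
    exact hx_uniq c h1 hy2.symm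
  -- the main finsets
  set NB : Finset V := (vgrN2 G v ∩ vgrN2 G u) \ G.neighborFinset v' with hNBdef
  set VC : Finset V := vgrN2 G v \ (G.neighborFinset u ∪ vgrN2 G u ∪ G.neighborFinset v')
    with hVCdef
  have hmemNB : ∀ w : V, w ∈ NB ↔ G.dist v w = 2 ∧ G.dist u w = 2 ∧ ¬G.Adj v' w := by
    intro w
    simp [hNBdef, mem_vgrN2, SimpleGraph.mem_neighborFinset, and_assoc]
  have hmemVC : ∀ z : V, z ∈ VC ↔
      G.dist v z = 2 ∧ ¬G.Adj u z ∧ G.dist u z ≠ 2 ∧ ¬G.Adj v' z := by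
    intro z
    simp only [hVCdef, Finset.mem_sdiff, Finset.mem_union, mem_vgrN2,
      SimpleGraph.mem_neighborFinset, not_or]
    tauto
  -- the choice functions
  have hnons : Nonempty V := ⟨u⟩
  set φ : V → V := fun w => Classical.epsilon fun y => G.Adj v y ∧ G.Adj y w with hφdef
  have hφ : ∀ w : V, G.dist v w = 2 → G.Adj v (φ w) ∧ G.Adj (φ w) w := by
    intro w hw
    rw [hφdef]
    exact Classical.epsilon_spec ((vgr18_dist_two_iff G v w).mp hw).2.2
  have hφu : ∀ w y : V, G.dist v w = 2 → G.Adj v y → G.Adj y w → y = φ w := by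
    intro w y hw h1 h2
    exact vgr18_unique_mid quad ((vgr18_dist_two_iff G v w).mp hw).1 h1 h2
      (hφ w hw).1 (hφ w hw).2
  set ψ : V → V := fun w => Classical.epsilon fun c => G.Adj u c ∧ G.Adj c w with hψdef
  have hψ : ∀ w : V, G.dist u w = 2 → G.Adj u (ψ w) ∧ G.Adj (ψ w) w := by
    intro w hw
    rw [hψdef]
    exact Classical.epsilon_spec ((vgr18_dist_two_iff G u w).mp hw).2.2
  -- counting functions
  set a : V → ℕ := fun w => (G.neighborFinset w ∩ vgrN3 G u).card with hadef
  set b : V → ℕ := fun w => (G.neighborFinset w ∩ vgrN3 G v).card with hbdef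
  set p : ℕ := ((G.neighborFinset v' \ {v}) ∩ vgrN3 G u).card with hpdef
  have hφNB : ∀ w ∈ NB, G.Adj v (φ w) ∧ (φ w) ≠ v' ∧ G.Adj (φ w) w := by
    intro w hw
    obtain ⟨h1, h2, h3⟩ := (hmemNB w).mp hw
    refine ⟨(hφ w h1).1, ?_, (hφ w h1).2⟩
    intro he
    exact h3 (he ▸ (hφ w h1).2)
  have ha1 : ∀ w ∈ NB, 1 ≤ a w := by
    intro w hw
    obtain ⟨h1, h2, h3⟩ := (hmemNB w).mp hw
    obtain ⟨hp1, hp2, hp3⟩ := hφNB w hw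
    rw [hadef]
    refine Finset.card_pos.mpr ⟨φ w, ?_⟩
    rw [Finset.mem_inter, SimpleGraph.mem_neighborFinset, mem_vgrN3]
    exact ⟨hp3.symm, h_viN3 (φ w) w hp1 hp2 hp3 h2⟩
  have hNBsubN2u : NB ⊆ vgrN2 G u := by
    intro w hw
    exact mem_vgrN2.mpr ((hmemNB w).mp hw).2.1
  have hNBsubN2v : NB ⊆ vgrN2 G v := by
    intro w hw
    exact mem_vgrN2.mpr ((hmemNB w).mp hw).1
  -- inequality (A)
  have hA : 1 + p + (∑ w ∈ NB, a w) ≤ 2 * ε := by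
    have hv'notNB : v' ∉ NB := by
      intro h
      have := ((hmemNB v').mp h).1
      omega
    have hsub : insert v' NB ⊆ vgrN2 G u := by
      intro y hy
      rcases Finset.mem_insert.mp hy with rfl | hy'
      · exact mem_vgrN2.mpr hv'd2
      · exact hNBsubN2u hy'
    have htermv' : (G.neighborFinset v' ∩ vgrN3 G u).card = p + 1 := by
      have hins : G.neighborFinset v' ∩ vgrN3 G u
          = insert v ((G.neighborFinset v' \ {v}) ∩ vgrN3 G u) := by
        ext t
        simp only [Finset.mem_inter, Finset.mem_insert, Finset.mem_sdiff,
          Finset.mem_singleton, SimpleGraph.mem_neighborFinset, mem_vgrN3]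
        constructor
        · rintro ⟨ht1, ht2⟩
          by_cases htv : t = v
          · exact Or.inl htv
          · exact Or.inr ⟨⟨ht1, htv⟩, ht2⟩
        · rintro (rfl | ⟨⟨ht1, _⟩, ht2⟩)
          · exact ⟨hv'adj.symm, hdist⟩
          · exact ⟨ht1, ht2⟩
      rw [hins, Finset.card_insert_of_notMem (by simp), hpdef]
    have hstep : ∑ y ∈ insert v' NB, (G.neighborFinset y ∩ vgrN3 G u).card
        ≤ vgrE23 G u := by
      rw [vgrE23]
      exact Finset.sum_le_sum_of_subset hsub
    rw [Finset.sum_insert hv'notNB, htermv'] at hstep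
    rw [hE23 u] at hstep
    have : ∑ w ∈ NB, (G.neighborFinset w ∩ vgrN3 G u).card = ∑ w ∈ NB, a w := rfl
    omega
  -- inequality (B)
  have hxN2v : G.dist v x = 2 := by
    rw [vgr18_dist_two_iff]
    exact ⟨fun h => hnadj_uv (h ▸ hux), fun h => hNuv x hux h.symm, v', hv'adj, hxv'.symm⟩
  have hB : 1 + (∑ w ∈ NB, b w) ≤ 2 * ε := by
    have hxnotNB : x ∉ NB := by
      intro h
      exact ((hmemNB x).mp h).2.2 hadjv'x
    have hsub : insert x NB ⊆ vgrN2 G v := by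
      intro y hy
      rcases Finset.mem_insert.mp hy with rfl | hy'
      · exact mem_vgrN2.mpr hxN2v
      · exact hNBsubN2v hy'
    have htermx : 1 ≤ (G.neighborFinset x ∩ vgrN3 G v).card := by
      refine Finset.card_pos.mpr ⟨u, ?_⟩
      rw [Finset.mem_inter, SimpleGraph.mem_neighborFinset, mem_vgrN3]
      exact ⟨hux.symm, hdvu⟩
    have hstep : ∑ y ∈ insert x NB, (G.neighborFinset y ∩ vgrN3 G v).card
        ≤ vgrE23 G v := by
      rw [vgrE23]
      exact Finset.sum_le_sum_of_subset hsub
    rw [Finset.sum_insert hxnotNB] at hstep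
    rw [hE23 v] at hstep
    have : ∑ w ∈ NB, (G.neighborFinset w ∩ vgrN3 G v).card = ∑ w ∈ NB, b w := rfl
    omega
  -- inequality (C) : k ≤ 2ε + p
  have hC : k ≤ 2 * ε + p := by
    set A' : Finset V := G.neighborFinset v' \ {v} with hA'def
    have hvmemv' : v ∈ G.neighborFinset v' := by
      rw [SimpleGraph.mem_neighborFinset]; exact hv'adj.symm
    have hA'card : A'.card = k - 1 := by
      rw [hA'def, Finset.card_sdiff_of_subset (by simpa using hvmemv'),
        card_neighborFinset_eq_degree, hreg]
      simp
    have hA'mem : ∀ b_ : V, b_ ∈ A' ↔ G.Adj v' b_ ∧ b_ ≠ v := by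
      intro b_; simp [hA'def, SimpleGraph.mem_neighborFinset]
    have hA'N2v : ∀ b_ ∈ A', G.dist v b_ = 2 := by
      intro b_ hb
      obtain ⟨h1, h2⟩ := (hA'mem b_).mp hb
      rw [vgr18_dist_two_iff]
      exact ⟨fun h => h2 h.symm, fun h => tri hv'adj h1 h.symm, v', hv'adj, h1⟩
    set Wall : Finset V := vgrN2 G v \ G.neighborFinset v' with hWalldef
    have hv'notWallmem : ∀ w ∈ Wall, G.dist v w = 2 ∧ ¬G.Adj v' w := by
      intro w hw
      have := Finset.mem_sdiff.mp hw
      rw [mem_vgrN2] at this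
      rw [SimpleGraph.mem_neighborFinset] at this
      exact this
    have hinterA' : vgrN2 G v ∩ G.neighborFinset v' = A' := by
      ext t
      simp only [Finset.mem_inter, mem_vgrN2, hA'mem, SimpleGraph.mem_neighborFinset]
      constructor
      · rintro ⟨h1, h2⟩
        refine ⟨h2, fun hh => ?_⟩
        subst hh; simp [SimpleGraph.dist_self] at h1
      · rintro ⟨h1, h2⟩
        exact ⟨hA'N2v t ((hA'mem t).mpr ⟨h1, h2⟩), h1⟩
    have hcount1 : Wall.card + (k-1) = k * (k-1) := by
      have h0 := Finset.card_sdiff_add_card_inter (vgrN2 G v) (G.neighborFinset v')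
      rw [hinterA', hA'card, vgr18_card_N2 hreg tri quad] at h0
      exact h0
    have hcount2 : (Wall \ vgrN3 G v').card + (Wall ∩ vgrN3 G v').card = Wall.card :=
      Finset.card_sdiff_add_card_inter _ _
    have hwallN2 : ∀ w ∈ Wall \ vgrN3 G v', G.dist v' w = 2 := by
      intro w hw
      obtain ⟨hwW, hw3⟩ := Finset.mem_sdiff.mp hw
      obtain ⟨h1, h2⟩ := hv'notWallmem w hwW
      rw [mem_vgrN3] at hw3
      obtain ⟨hvw, hnadjvw, y, hy1, hy2⟩ := (vgr18_dist_two_iff G v w).mp h1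
      have hle : G.dist v' w ≤ 3 := by
        simpa using SimpleGraph.dist_le
          (Walk.cons hv'adj.symm (Walk.cons hy1 (Walk.cons hy2 Walk.nil)))
      have h0 : G.dist v' w ≠ 0 := by
        rw [SimpleGraph.dist_ne_zero_iff_ne_and_reachable]
        refine ⟨fun heq => ?_, ⟨Walk.cons hv'adj.symm (Walk.cons hy1
          (Walk.cons hy2 Walk.nil))⟩⟩
        rw [← heq] at h1
        omega
      have h1' : G.dist v' w ≠ 1 := fun he => h2 (SimpleGraph.dist_eq_one_iff_adj.mp he)
      omega
    have hWN : Wall \ vgrN3 G v' ⊆ A'.biUnion (fun b_ => G.neighborFinset b_ ∩ Wall) := by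
      intro w hw
      have hd2 := hwallN2 w hw
      obtain ⟨hwW, _⟩ := Finset.mem_sdiff.mp hw
      obtain ⟨h1, h2⟩ := hv'notWallmem w hwW
      obtain ⟨hne, hnadj, y, hy1, hy2⟩ := (vgr18_dist_two_iff G v' w).mp hd2
      have hyv : y ≠ v := by
        intro hh
        rw [hh] at hy2
        exact ((vgr18_dist_two_iff G v w).mp h1).2.1 hy2
      refine Finset.mem_biUnion.mpr ⟨y, (hA'mem y).mpr ⟨hy1, hyv⟩, ?_⟩
      rw [Finset.mem_inter, SimpleGraph.mem_neighborFinset]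
      exact ⟨hy2, hwW⟩
    have hv'notWall : v' ∉ Wall := by
      intro h
      have := (hv'notWallmem v' h).1
      omega
    have hperb : ∀ b_ ∈ A', (G.neighborFinset b_ ∩ Wall).card
        ≤ (k-2) + (if b_ ∈ vgrN3 G u then 1 else 0) := by
      intro b_ hb
      obtain ⟨hb1, hb2⟩ := (hA'mem b_).mp hb
      by_cases h3u : b_ ∈ vgrN3 G u
      · simp only [h3u, if_true]
        have hsub : G.neighborFinset b_ ∩ Wall ⊆ G.neighborFinset b_ \ {v'} := by
          intro t ht
          rw [Finset.mem_inter] at ht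
          rw [Finset.mem_sdiff, Finset.mem_singleton]
          exact ⟨ht.1, fun he => hv'notWall (he ▸ ht.2)⟩
        have hcs : (G.neighborFinset b_ \ {v'}).card = k - 1 := by
          rw [Finset.card_sdiff_of_subset (by simp [SimpleGraph.mem_neighborFinset, hb1.symm]),
            card_neighborFinset_eq_degree, hreg]
          simp
        have := Finset.card_le_card hsub
        omega
      · simp only [h3u, if_false]
        obtain ⟨e, he1, he2, he3⟩ : ∃ e : V, e ∈ G.neighborFinset b_ ∧ e ∉ Wall ∧ e ≠ v' := by
          by_cases hbx : b_ = x
          · subst hbx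
            refine ⟨u, ?_, ?_, fun h => huv'ne h⟩
            · rw [SimpleGraph.mem_neighborFinset]; exact hux.symm
            · intro h
              have := (hv'notWallmem u h).1
              omega
          · have hdub : G.dist u b_ = 2 := by
              have hle : G.dist u b_ ≤ 3 := by
                simpa using SimpleGraph.dist_le
                  (Walk.cons hux (Walk.cons hxv' (Walk.cons hb1 Walk.nil)))
              have h0 : G.dist u b_ ≠ 0 := by
                rw [SimpleGraph.dist_ne_zero_iff_ne_and_reachable]
                refine ⟨?_, ⟨Walk.cons hux (Walk.cons hxv' (Walk.cons hb1 Walk.nil))⟩⟩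
                rintro rfl
                exact hnadjuv' hb1.symm
              have h1' : G.dist u b_ ≠ 1 := by
                intro he
                exact hbx (hx_uniq b_ (SimpleGraph.dist_eq_one_iff_adj.mp he) hb1.symm)
              have h3' : G.dist u b_ ≠ 3 := fun he => h3u (mem_vgrN3.mpr he)
              omega
            obtain ⟨hc1, hc2⟩ := hψ b_ hdub
            refine ⟨ψ b_, ?_, ?_, ?_⟩
            · rw [SimpleGraph.mem_neighborFinset]; exact hc2.symm
            · intro h
              obtain ⟨hw1, hw2⟩ := hv'notWallmem _ h
              have hxx := hNuN2v (ψ b_) hc1 hw1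
              exact hw2 (hxx ▸ hadjv'x)
            · intro h
              exact hnadjuv' (h ▸ hc1)
        have hsub : G.neighborFinset b_ ∩ Wall ⊆ G.neighborFinset b_ \ {v', e} := by
          intro t ht
          rw [Finset.mem_inter] at ht
          simp only [Finset.mem_sdiff, Finset.mem_insert, Finset.mem_singleton]
          push_neg
          exact ⟨ht.1, fun he => hv'notWall (he ▸ ht.2), fun he' => he2 (he' ▸ ht.2)⟩
        have hcs : (G.neighborFinset b_ \ {v', e}).card = k - 2 := by
          rw [Finset.card_sdiff_of_subset, card_neighborFinset_eq_degree, hreg]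
          · rw [Finset.card_insert_of_notMem (by simpa using he3.symm), Finset.card_singleton]
          · intro t ht
            simp only [Finset.mem_insert, Finset.mem_singleton] at ht
            rcases ht with rfl | rfl
            · rw [SimpleGraph.mem_neighborFinset]; exact hb1.symm
            · exact he1
        have := Finset.card_le_card hsub
        omega
    have hXbound : (Wall \ vgrN3 G v').card ≤ (k-1) * (k-2) + p := by
      calc (Wall \ vgrN3 G v').card
          ≤ (A'.biUnion (fun b_ => G.neighborFinset b_ ∩ Wall)).card :=
            Finset.card_le_card hWN
        _ ≤ ∑ b_ ∈ A', (G.neighborFinset b_ ∩ Wall).card := Finset.card_biUnion_le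
        _ ≤ ∑ b_ ∈ A', ((k-2) + (if b_ ∈ vgrN3 G u then 1 else 0)) :=
            Finset.sum_le_sum hperb
        _ = (k-1) * (k-2) + p := by
            rw [Finset.sum_add_distrib, Finset.sum_const, hA'card, smul_eq_mul,
              Finset.sum_boole, Finset.filter_mem_eq_inter, hpdef]
            simp
    have htermu : 1 ≤ (G.neighborFinset u ∩ vgrN3 G v').card := by
      by_contra hcon
      push_neg at hcon
      have hempty : ∀ c : V, G.Adj u c → G.dist v' c ≠ 3 := by
        intro c h1 h2
        have hmem : c ∈ G.neighborFinset u ∩ vgrN3 G v' := by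
          rw [Finset.mem_inter, SimpleGraph.mem_neighborFinset, mem_vgrN3]
          exact ⟨h1, h2⟩
        have hpos := Finset.card_pos.mpr ⟨c, hmem⟩
        omega
      have hcd2 : ∀ c ∈ G.neighborFinset u \ {x}, G.dist v' c = 2 := by
        intro c hc
        obtain ⟨hc1, hc2⟩ := Finset.mem_sdiff.mp hc
        rw [SimpleGraph.mem_neighborFinset] at hc1
        rw [Finset.mem_singleton] at hc2
        have hle : G.dist v' c ≤ 3 := by
          simpa using SimpleGraph.dist_le
            (Walk.cons hadjv'x (Walk.cons hux.symm (Walk.cons hc1 Walk.nil)))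
        have h0 : G.dist v' c ≠ 0 := by
          rw [SimpleGraph.dist_ne_zero_iff_ne_and_reachable]
          refine ⟨?_, ⟨Walk.cons hadjv'x (Walk.cons hux.symm (Walk.cons hc1 Walk.nil))⟩⟩
          rintro rfl
          exact hnadjuv' hc1
        have h1' : G.dist v' c ≠ 1 := by
          intro he
          exact hc2 (hx_uniq c hc1 (SimpleGraph.dist_eq_one_iff_adj.mp he).symm)
        have h3' := hempty c hc1
        omega
      set ω : V → V := fun c => Classical.epsilon fun y => G.Adj v' y ∧ G.Adj y c with hωdef
      have hω : ∀ c ∈ G.neighborFinset u \ {x}, G.Adj v' (ω c) ∧ G.Adj (ω c) c := by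
        intro c hc
        rw [hωdef]
        exact Classical.epsilon_spec ((vgr18_dist_two_iff G v' c).mp (hcd2 c hc)).2.2
      have hmaps : ∀ c ∈ G.neighborFinset u \ {x}, ω c ∈ A' \ {x} := by
        intro c hc
        obtain ⟨hw1, hw2⟩ := hω c hc
        obtain ⟨hc1, hc2⟩ := Finset.mem_sdiff.mp hc
        rw [SimpleGraph.mem_neighborFinset] at hc1
        rw [Finset.mem_singleton] at hc2
        rw [Finset.mem_sdiff, hA'mem, Finset.mem_singleton]
        refine ⟨⟨hw1, ?_⟩, ?_⟩
        · rintro rfl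
          exact hNuv c hc1 hw2.symm
        · rintro rfl
          exact tri hux hw2 hc1.symm
      have hinj : Set.InjOn ω ↑(G.neighborFinset u \ {x}) := by
        intro c hcm c' hcm' heq
        rw [Finset.mem_coe] at hcm hcm'
        obtain ⟨h1, h2⟩ := hω c hcm
        obtain ⟨h1', h2'⟩ := hω c' hcm'
        rw [heq] at h1 h2
        by_contra hne
        have hc1 : G.Adj u c := by
          have hh := (Finset.mem_sdiff.mp hcm).1
          rwa [SimpleGraph.mem_neighborFinset] at hh
        have hc1' : G.Adj u c' := by
          have hh := (Finset.mem_sdiff.mp hcm').1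
          rwa [SimpleGraph.mem_neighborFinset] at hh
        have huω : u ≠ ω c' := by
          intro hh
          rw [← hh] at h1'
          exact hnadjuv' h1'.symm
        exact quad hc1 h2.symm h2' hc1'.symm huω hne
      have hcard1 : (G.neighborFinset u \ {x}).card = k - 1 := by
        rw [Finset.card_sdiff_of_subset (by simp [SimpleGraph.mem_neighborFinset, hux]),
          card_neighborFinset_eq_degree, hreg, Finset.card_singleton]
      have hcard2 : (A' \ {x}).card = k - 2 := by
        have hxA' : x ∈ A' := (hA'mem x).mpr ⟨hadjv'x, hxny⟩
        rw [Finset.card_sdiff_of_subset (by simpa using hxA'), hA'card, Finset.card_singleton]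
        omega
      have hle := Finset.card_le_card_of_injOn ω hmaps hinj
      omega
    have hXsum : (Wall ∩ vgrN3 G v').card
        ≤ ∑ y ∈ G.neighborFinset v \ {v'}, (G.neighborFinset y ∩ vgrN3 G v').card := by
      have hsub : Wall ∩ vgrN3 G v'
          ⊆ (G.neighborFinset v \ {v'}).biUnion
            (fun y => G.neighborFinset y ∩ vgrN3 G v') := by
        intro w hw
        obtain ⟨hwW, hw3⟩ := Finset.mem_inter.mp hw
        obtain ⟨h1, h2⟩ := hv'notWallmem w hwW
        obtain ⟨hp1, hp2⟩ := hφ w h1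
        have hpv' : φ w ≠ v' := fun he => h2 (he ▸ hp2)
        refine Finset.mem_biUnion.mpr ⟨φ w, ?_, ?_⟩
        · rw [Finset.mem_sdiff, SimpleGraph.mem_neighborFinset, Finset.mem_singleton]
          exact ⟨hp1, hpv'⟩
        · rw [Finset.mem_inter, SimpleGraph.mem_neighborFinset]
          exact ⟨hp2, hw3⟩
      calc (Wall ∩ vgrN3 G v').card
          ≤ _ := Finset.card_le_card hsub
        _ ≤ _ := Finset.card_biUnion_le
    have hunotN : u ∉ G.neighborFinset v \ {v'} := by
      intro h
      have := (Finset.mem_sdiff.mp h).1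
      rw [SimpleGraph.mem_neighborFinset] at this
      exact hnadj_uv this.symm
    have hsubv' : insert u (G.neighborFinset v \ {v'}) ⊆ vgrN2 G v' := by
      intro y hy
      rcases Finset.mem_insert.mp hy with rfl | hy'
      · rw [mem_vgrN2, vgr18_dist_two_iff]
        exact ⟨fun h => huv'ne h.symm, fun h => hnadjuv' h.symm, x, hadjv'x, hux.symm⟩
      · obtain ⟨hy1, hy2⟩ := Finset.mem_sdiff.mp hy'
        rw [SimpleGraph.mem_neighborFinset] at hy1
        rw [Finset.mem_singleton] at hy2
        rw [mem_vgrN2, vgr18_dist_two_iff]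
        refine ⟨fun h => hy2 h.symm, fun h => tri hy1 h.symm hv'adj.symm, v, hv'adj.symm, hy1⟩
    have hEv' : 1 + (Wall ∩ vgrN3 G v').card ≤ 2 * ε := by
      have hstep : ∑ y ∈ insert u (G.neighborFinset v \ {v'}),
          (G.neighborFinset y ∩ vgrN3 G v').card ≤ vgrE23 G v' := by
        rw [vgrE23]
        exact Finset.sum_le_sum_of_subset hsubv'
      rw [Finset.sum_insert hunotN, hE23 v'] at hstep
      omega
    have hid5 : k * (k-1) = (k-1) * (k-2) + 2 * (k-1) := by
      obtain ⟨j, rfl⟩ : ∃ j, k = j + 3 := ⟨k - 3, by omega⟩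
      simp only [show j+3-1 = j+2 by omega, show j+3-2 = j+1 by omega]
      ring
    omega
  -- the key uniqueness
  have hKEY : ∀ vi : V, G.Adj v vi → vi ≠ v' →
      ∀ w1 w2 : V, w1 ∈ G.neighborFinset vi ∩ NB → w2 ∈ G.neighborFinset vi ∩ NB →
      w1 = w2 := by
    intro vi h1 h2 w1 w2 hw1 hw2
    by_contra hne
    obtain ⟨hw1a, hw1b⟩ := Finset.mem_inter.mp hw1
    obtain ⟨hw2a, hw2b⟩ := Finset.mem_inter.mp hw2
    rw [SimpleGraph.mem_neighborFinset] at hw1a hw2a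
    have hGw : ∀ w : V, w ∈ NB → G.Adj vi w →
        k ≤ 2 + a w + b w + (G.neighborFinset w ∩ NB).card := by
      intro w hwNB hadj
      obtain ⟨hdv2, hdu2, hnv'⟩ := (hmemNB w).mp hwNB
      have hvnew : v ≠ w := ((vgr18_dist_two_iff G v w).mp hdv2).1
      have hnadjvw : ¬G.Adj v w := ((vgr18_dist_two_iff G v w).mp hdv2).2.1
      have hunew : u ≠ w := ((vgr18_dist_two_iff G u w).mp hdu2).1
      have hnadjuw : ¬G.Adj u w := ((vgr18_dist_two_iff G u w).mp hdu2).2.1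
      have hvid3 : G.dist u vi = 3 := h_viN3 vi w h1 h2 hadj hdu2
      have hcover : G.neighborFinset w ⊆
          (({vi} ∪ (G.neighborFinset w ∩ G.neighborFinset u))
            ∪ (G.neighborFinset w ∩ G.neighborFinset v'))
          ∪ (((G.neighborFinset w ∩ vgrN3 G u) \ {vi})
            ∪ ((G.neighborFinset w ∩ vgrN3 G v) ∪ (G.neighborFinset w ∩ NB))) := by
        intro z hz
        rw [SimpleGraph.mem_neighborFinset] at hz
        simp only [Finset.mem_union, Finset.mem_inter, Finset.mem_sdiff,
          Finset.mem_singleton, SimpleGraph.mem_neighborFinset, mem_vgrN3]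
        by_cases hzu : G.Adj u z
        · exact Or.inl (Or.inl (Or.inr ⟨hz, hzu⟩))
        by_cases hzv' : G.Adj v' z
        · exact Or.inl (Or.inr ⟨hz, hzv'⟩)
        by_cases hzvi : z = vi
        · exact Or.inl (Or.inl (Or.inl hzvi))
        by_cases hz3u : G.dist u z = 3
        · exact Or.inr (Or.inl ⟨⟨hz, hz3u⟩, hzvi⟩)
        by_cases hz3v : G.dist v z = 3
        · exact Or.inr (Or.inr (Or.inl ⟨hz, hz3v⟩))
        refine Or.inr (Or.inr (Or.inr ⟨hz, ?_⟩))
        have hruw : G.Reachable u w := Reachable.of_dist_ne_zero (by omega)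
        have hduz : G.dist u z = 2 := by
          have hle : G.dist u z ≤ 3 := by
            have := vgr18_dist_le_succ hz hruw; omega
          have h0 : G.dist u z ≠ 0 := by
            rw [SimpleGraph.dist_ne_zero_iff_ne_and_reachable]
            refine ⟨?_, hruw.trans ⟨hz.toWalk⟩⟩
            intro hh
            rw [← hh] at hz
            exact hnadjuw hz.symm
          have h1'' : G.dist u z ≠ 1 :=
            fun he => hzu (SimpleGraph.dist_eq_one_iff_adj.mp he)
          omega
        have hrvw : G.Reachable v w := Reachable.of_dist_ne_zero (by omega)
        have hdvz : G.dist v z = 2 := by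
          have hle : G.dist v z ≤ 3 := by
            have := vgr18_dist_le_succ hz hrvw; omega
          have h0 : G.dist v z ≠ 0 := by
            rw [SimpleGraph.dist_ne_zero_iff_ne_and_reachable]
            refine ⟨?_, hrvw.trans ⟨hz.toWalk⟩⟩
            intro hh
            rw [← hh] at hz
            exact hnadjvw hz.symm
          have h1'' : G.dist v z ≠ 1 := by
            intro he
            have hadjvz := SimpleGraph.dist_eq_one_iff_adj.mp he
            exact hzvi (vgr18_unique_mid quad hvnew hadjvz hz.symm h1 hadj)
          omega
        exact (hmemNB z).mpr ⟨hdvz, hduz, hzv'⟩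
      have hkdeg : (G.neighborFinset w).card = k := by
        rw [card_neighborFinset_eq_degree, hreg]
      have hmid : (G.neighborFinset w ∩ G.neighborFinset u).card = 1 :=
        vgr18_card_mid quad hdu2
      have hv'le : (G.neighborFinset w ∩ G.neighborFinset v').card ≤ 1 := by
        rw [Finset.card_le_one]
        intro y hy y' hy'
        rw [Finset.mem_inter, SimpleGraph.mem_neighborFinset,
          SimpleGraph.mem_neighborFinset] at hy hy'
        have hv'w : v' ≠ w := by
          intro hh
          rw [hh] at hv'adj
          exact hnadjvw hv'adj
        exact vgr18_unique_mid quad hv'w hy.2 hy.1.symm hy'.2 hy'.1.symm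
      have hviN3mem : vi ∈ (G.neighborFinset w ∩ vgrN3 G u) := by
        rw [Finset.mem_inter, SimpleGraph.mem_neighborFinset, mem_vgrN3]
        exact ⟨hadj.symm, hvid3⟩
      have ha3 : ((G.neighborFinset w ∩ vgrN3 G u) \ {vi}).card = a w - 1 := by
        rw [Finset.card_sdiff_of_subset (by simpa using hviN3mem), Finset.card_singleton, hadef]
      have haw1 := ha1 w hwNB
      have hbw : (G.neighborFinset w ∩ vgrN3 G v).card = b w := rfl
      have hstep := Finset.card_le_card hcover
      have hb1 := Finset.card_union_le
        (({vi} ∪ (G.neighborFinset w ∩ G.neighborFinset u))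
          ∪ (G.neighborFinset w ∩ G.neighborFinset v'))
        (((G.neighborFinset w ∩ vgrN3 G u) \ {vi})
          ∪ ((G.neighborFinset w ∩ vgrN3 G v) ∪ (G.neighborFinset w ∩ NB)))
      have hb2 := Finset.card_union_le
        ({vi} ∪ (G.neighborFinset w ∩ G.neighborFinset u))
        (G.neighborFinset w ∩ G.neighborFinset v')
      have hb3 := Finset.card_union_le ({vi} : Finset V)
        (G.neighborFinset w ∩ G.neighborFinset u)
      have hb4 := Finset.card_union_le
        ((G.neighborFinset w ∩ vgrN3 G u) \ {vi})
        ((G.neighborFinset w ∩ vgrN3 G v) ∪ (G.neighborFinset w ∩ NB))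
      have hb5 := Finset.card_union_le (G.neighborFinset w ∩ vgrN3 G v)
        (G.neighborFinset w ∩ NB)
      have hsing : ({vi} : Finset V).card = 1 := Finset.card_singleton vi
      omega
    have hnadj12 : ¬G.Adj w1 w2 := fun h => tri h hw2a.symm hw1a
    have hd_disj : Disjoint (G.neighborFinset w1 ∩ NB) (G.neighborFinset w2 ∩ NB) := by
      rw [Finset.disjoint_left]
      intro z hz1 hz2
      rw [Finset.mem_inter, SimpleGraph.mem_neighborFinset] at hz1 hz2
      have hzvi : z ≠ vi := by
        intro hh
        have hdd := ((hmemNB z).mp hz1.2).1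
        rw [hh] at hdd
        have := SimpleGraph.dist_eq_one_iff_adj.mpr h1
        omega
      exact quad hz1.1 hz2.1.symm hw2a.symm hw1a hne hzvi
    have hpair_disj : Disjoint ({w1, w2} : Finset V)
        ((G.neighborFinset w1 ∩ NB) ∪ (G.neighborFinset w2 ∩ NB)) := by
      rw [Finset.disjoint_left]
      intro z hz hz2
      rw [Finset.mem_insert, Finset.mem_singleton] at hz
      rw [Finset.mem_union, Finset.mem_inter, Finset.mem_inter,
        SimpleGraph.mem_neighborFinset, SimpleGraph.mem_neighborFinset] at hz2
      rcases hz with rfl | rfl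
      · rcases hz2 with ⟨h, _⟩ | ⟨h, _⟩
        · exact G.irrefl h
        · exact hnadj12 h.symm
      · rcases hz2 with ⟨h, _⟩ | ⟨h, _⟩
        · exact hnadj12 h
        · exact G.irrefl h
    have hpairsub : ({w1, w2} : Finset V) ⊆ NB := by
      intro z hz
      rcases Finset.mem_insert.mp hz with rfl | hz'
      · exact hw1b
      · rw [Finset.mem_singleton] at hz'
        subst hz'
        exact hw2b
    have hsubNB : (({w1, w2} : Finset V)
        ∪ ((G.neighborFinset w1 ∩ NB) ∪ (G.neighborFinset w2 ∩ NB))) ⊆ NB := by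
      intro z hz
      rcases Finset.mem_union.mp hz with h | h
      · exact hpairsub h
      · rcases Finset.mem_union.mp h with h' | h'
        · exact (Finset.mem_inter.mp h').2
        · exact (Finset.mem_inter.mp h').2
    have hF : 2 + (G.neighborFinset w1 ∩ NB).card + (G.neighborFinset w2 ∩ NB).card
        ≤ NB.card := by
      have hcu := Finset.card_le_card hsubNB
      rw [Finset.card_union_of_disjoint hpair_disj,
        Finset.card_union_of_disjoint hd_disj, Finset.card_pair hne] at hcu
      omega
    have hsumsplit : (∑ w ∈ NB \ {w1, w2}, a w) + (∑ w ∈ ({w1, w2} : Finset V), a w)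
        = ∑ w ∈ NB, a w := Finset.sum_sdiff hpairsub
    have hpa : ∑ w ∈ ({w1, w2} : Finset V), a w = a w1 + a w2 := Finset.sum_pair hne
    have hrest : (NB \ {w1, w2}).card ≤ ∑ w ∈ NB \ {w1, w2}, a w := by
      have hh := Finset.card_nsmul_le_sum (NB \ {w1, w2}) a 1
        (fun w hw => ha1 w (Finset.mem_sdiff.mp hw).1)
      simpa using hh
    have hcardrest : (NB \ {w1, w2}).card + 2 = NB.card := by
      have h2' := Finset.card_le_card hpairsub
      rw [Finset.card_pair hne] at h2'
      rw [Finset.card_sdiff_of_subset hpairsub, Finset.card_pair hne]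
      omega
    have hbsum : b w1 + b w2 ≤ ∑ w ∈ NB, b w := by
      have h0 : ∑ w ∈ ({w1, w2} : Finset V), b w ≤ ∑ w ∈ NB, b w :=
        Finset.sum_le_sum_of_subset hpairsub
      rw [Finset.sum_pair hne] at h0
      exact h0
    have hG1 := hGw w1 hw1b hw1a
    have hG2 := hGw w2 hw2b hw2a
    omega
  -- partition of neighbours of a vi
  have hsplitvi : ∀ vi : V, G.Adj v vi → vi ≠ v' →
      k - 1 = (G.neighborFinset vi ∩ NB).card + (G.neighborFinset vi ∩ VC).card := by
    intro vi h1 h2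
    have hcover : G.neighborFinset vi
        = {v} ∪ ((G.neighborFinset vi ∩ NB) ∪ (G.neighborFinset vi ∩ VC)) := by
      ext z
      simp only [Finset.mem_union, Finset.mem_inter, Finset.mem_singleton,
        SimpleGraph.mem_neighborFinset]
      constructor
      · intro hz
        by_cases hzv : z = v
        · exact Or.inl hzv
        have hdvz : G.dist v z = 2 := by
          rw [vgr18_dist_two_iff]
          exact ⟨fun hh => hzv hh.symm, fun hh => tri h1 hz hh.symm, vi, h1, hz⟩
        have hnadjuz : ¬G.Adj u z := by
          intro huz
          have hle : G.dist u vi ≤ 2 := by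
            simpa using SimpleGraph.dist_le (Walk.cons huz (Walk.cons hz.symm Walk.nil))
          have h0 : G.dist u vi ≠ 0 := by
            rw [SimpleGraph.dist_ne_zero_iff_ne_and_reachable]
            refine ⟨?_, ⟨Walk.cons huz (Walk.cons hz.symm Walk.nil)⟩⟩
            intro hh
            rw [← hh] at h1
            exact hnadj_uv h1.symm
          have h1'' : G.dist u vi ≠ 1 := by
            intro he
            have hadjuvi := SimpleGraph.dist_eq_one_iff_adj.mp he
            have : G.dist u v ≤ 2 := by
              simpa using SimpleGraph.dist_le
                (Walk.cons hadjuvi (Walk.cons h1.symm Walk.nil))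
            omega
          have h2'' : G.dist u vi = 2 := by omega
          exact h2 (huniq vi h1 h2'')
        have hnadjv'z : ¬G.Adj v' z := by
          intro hvz
          exact quad h1 hz hvz.symm hv'adj.symm (fun hh => hzv hh.symm) h2
        by_cases hdu2 : G.dist u z = 2
        · exact Or.inr (Or.inl ⟨hz, (hmemNB z).mpr ⟨hdvz, hdu2, hnadjv'z⟩⟩)
        · exact Or.inr (Or.inr ⟨hz, (hmemVC z).mpr ⟨hdvz, hnadjuz, hdu2, hnadjv'z⟩⟩)
      · rintro (rfl | ⟨hz, _⟩ | ⟨hz, _⟩)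
        · exact h1.symm
        · exact hz
        · exact hz
    have hdisj2 : Disjoint (G.neighborFinset vi ∩ NB) (G.neighborFinset vi ∩ VC) := by
      rw [Finset.disjoint_left]
      intro z hz1 hz2
      have hm1 := (hmemNB z).mp (Finset.mem_inter.mp hz1).2
      have hm2 := (hmemVC z).mp (Finset.mem_inter.mp hz2).2
      exact hm2.2.2.1 hm1.2.1
    have hdisj1 : Disjoint ({v} : Finset V)
        ((G.neighborFinset vi ∩ NB) ∪ (G.neighborFinset vi ∩ VC)) := by
      rw [Finset.disjoint_left]
      intro z hz hz2
      rw [Finset.mem_singleton] at hz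
      subst hz
      rcases Finset.mem_union.mp hz2 with h | h
      · have := ((hmemNB z).mp (Finset.mem_inter.mp h).2).1
        simp [SimpleGraph.dist_self] at this
      · have := ((hmemVC z).mp (Finset.mem_inter.mp h).2).1
        simp [SimpleGraph.dist_self] at this
    have hkdeg : (G.neighborFinset vi).card = k := by
      rw [card_neighborFinset_eq_degree, hreg]
    rw [hcover, Finset.card_union_of_disjoint hdisj1,
      Finset.card_union_of_disjoint hdisj2, Finset.card_singleton] at hkdeg
    omega
  -- rewrite both sides as finset cards
  have hinnerEq : ∀ vi : V, (G.neighborSet vi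
      ∩ (distTwoSet G v \ (G.neighborSet u ∪ distTwoSet G u ∪ G.neighborSet v'))).ncard
      = (G.neighborFinset vi ∩ VC).card := by
    intro vi
    have hseteq : (G.neighborSet vi
        ∩ (distTwoSet G v \ (G.neighborSet u ∪ distTwoSet G u ∪ G.neighborSet v')))
        = ↑(G.neighborFinset vi ∩ VC) := by
      ext z
      simp only [Set.mem_inter_iff, Set.mem_diff, Set.mem_union,
        SimpleGraph.mem_neighborSet, distTwoSet, Set.mem_setOf_eq, Finset.mem_coe,
        Finset.mem_inter, SimpleGraph.mem_neighborFinset]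
      rw [hmemVC z]
      tauto
    rw [hseteq, Set.ncard_coe_finset]
  have hLHS : {vi : V | G.Adj v vi ∧ vi ≠ v' ∧
      (G.neighborSet vi
        ∩ (distTwoSet G v \ (G.neighborSet u ∪ distTwoSet G u ∪ G.neighborSet v'))).ncard
        = k - 2}
      = ↑(Finset.univ.filter fun vi : V => G.Adj v vi ∧ vi ≠ v'
          ∧ (G.neighborFinset vi ∩ VC).card = k - 2) := by
    ext vi
    simp only [Set.mem_setOf_eq, Finset.coe_filter, Finset.mem_univ, true_and]
    rw [hinnerEq vi]
  have hRHS : ((distTwoSet G v ∩ distTwoSet G u) \ G.neighborSet v') = ↑NB := by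
    ext z
    simp only [Set.mem_diff, Set.mem_inter_iff, distTwoSet, Set.mem_setOf_eq,
      SimpleGraph.mem_neighborSet, Finset.mem_coe]
    rw [hmemNB z]
    tauto
  rw [hLHS, hRHS, Set.ncard_coe_finset, Set.ncard_coe_finset]
  symm
  refine Finset.card_bij (fun w _ => φ w) ?_ ?_ ?_
  · intro w hw
    obtain ⟨hp1, hp2, hp3⟩ := hφNB w hw
    rw [Finset.mem_filter]
    refine ⟨Finset.mem_univ _, hp1, hp2, ?_⟩
    have hsplit := hsplitvi (φ w) hp1 hp2
    have hone : (G.neighborFinset (φ w) ∩ NB).card = 1 := by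
      rw [Finset.card_eq_one]
      refine ⟨w, ?_⟩
      ext t
      simp only [Finset.mem_inter, Finset.mem_singleton]
      constructor
      · intro ht
        exact hKEY (φ w) hp1 hp2 t w (Finset.mem_inter.mpr ht)
          (Finset.mem_inter.mpr ⟨by rwa [SimpleGraph.mem_neighborFinset], hw⟩)
      · rintro rfl
        exact ⟨by rwa [SimpleGraph.mem_neighborFinset], hw⟩
    show (G.neighborFinset (φ w) ∩ VC).card = k - 2
    omega
  · intro w1 hw1m w2 hw2m heq
    have h1 := hφNB w1 hw1m
    have h2' := hφNB w2 hw2m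
    have heq' : φ w1 = φ w2 := heq
    refine hKEY (φ w1) h1.1 h1.2.1 w1 w2 ?_ ?_
    · exact Finset.mem_inter.mpr ⟨by
        rw [SimpleGraph.mem_neighborFinset]; exact h1.2.2, hw1m⟩
    · rw [heq']
      exact Finset.mem_inter.mpr ⟨by
        rw [SimpleGraph.mem_neighborFinset]; exact h2'.2.2, hw2m⟩
  · intro vi hvi
    rw [Finset.mem_filter] at hvi
    obtain ⟨_, hv1, hv2, hv3⟩ := hvi
    have hsplit := hsplitvi vi hv1 hv2
    have hone : (G.neighborFinset vi ∩ NB).card = 1 := by omega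
    obtain ⟨w, hwmem⟩ := Finset.card_eq_one.mp hone
    have hwin : w ∈ G.neighborFinset vi ∩ NB := by
      rw [hwmem]; exact Finset.mem_singleton_self w
    obtain ⟨hwa, hwb⟩ := Finset.mem_inter.mp hwin
    rw [SimpleGraph.mem_neighborFinset] at hwa
    refine ⟨w, hwb, ?_⟩
    have hd := ((hmemNB w).mp hwb).1
    exact (hφu w vi hd hv1 hwa).symm
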